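/- Let ε > 0, ρ > 0, and k ≥ 1. Let Q = {q_1,…,q_k} be a set of k centers with c(P,Q) = opt(P,k), let {P_1,…,P_k} be the induced partition of P (each p ∈ P_i has q_i among its closest centers in Q) with every P_i nonempty, and for each i let μ_i ∈ ℝ^d attain opt(P_i,1), i.e., c(P_i,{μ_i}) = opt(P_i,1). Suppose opt(P,k) − opt(P,2k) ≤ w_min·(ε/ρ)^z. Then for every set X of models and every per-point cost function cost : ℝ^d × X → ℝ satisfying (i) cost(p,x) ≥ 1 for all p ∈ ℝ^d and x ∈ X, and (ii) cost is ρ-Lipschitz in the point argument, the set S = {μ_1,…,μ_k} with weights u_i := Σ_{p∈P_i} w_p is an ε-coreset for P w.r.t. the sum cost, and S (with arbitrary weights) is an ε-coreset for P w.r.t. the maximum cost. (Theorem 1) -/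

import Mathlib

open scoped Classical

/-- Points of `ℝ^d` with the Euclidean norm. -/
abbrev Pt (d : ℕ) := EuclideanSpace ℝ (Fin d)

/-- Weighted clustering cost `c(P,Q) = Σ_{p∈P} w_p · (min_{q∈Q} ‖p−q‖)^z`
(the minimum is expressed as an infimum, which agrees with the minimum
for nonempty finite `Q`). -/
noncomputable def cCost {d : ℕ} (z : ℝ) (w : Pt d → ℝ) (P Q : Finset (Pt d)) : ℝ :=
  ∑ p ∈ P, w p * (sInf ((fun q => dist p q) '' (Q : Set (Pt d)))) ^ z

/-- Optimal `k`-clustering cost `opt(P,k) = inf { c(P,Q) : |Q| = k }`. -/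
noncomputable def optCost {d : ℕ} (z : ℝ) (w : Pt d → ℝ) (P : Finset (Pt d)) (k : ℕ) : ℝ :=
  sInf { r : ℝ | ∃ Q : Finset (Pt d), Q.card = k ∧ r = cCost z w P Q }

section Helpers

variable {d : ℕ} {z : ℝ} {w : Pt d → ℝ}

lemma distImg_bdd (p : Pt d) (Q : Set (Pt d)) : BddBelow ((fun q => dist p q) '' Q) :=
  ⟨0, by rintro r ⟨q, -, rfl⟩; exact dist_nonneg⟩

lemma sInf_dist_nonneg (p : Pt d) (Q : Set (Pt d)) : 0 ≤ sInf ((fun q => dist p q) '' Q) :=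
  Real.sInf_nonneg (by rintro r ⟨q, -, rfl⟩; exact dist_nonneg)

lemma cCost_nonneg (hz : 0 < z) {P Q : Finset (Pt d)} (hw : ∀ p ∈ P, 0 ≤ w p) :
    0 ≤ cCost z w P Q :=
  Finset.sum_nonneg fun p hp => mul_nonneg (hw p hp) (Real.rpow_nonneg (sInf_dist_nonneg p _) z)

lemma cCost_singleton (z : ℝ) (w : Pt d → ℝ) (P : Finset (Pt d)) (c : Pt d) :
    cCost z w P {c} = ∑ p ∈ P, w p * (dist p c) ^ z := by
  refine Finset.sum_congr rfl fun p _ => ?_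
  simp

lemma optCost_le {P Q : Finset (Pt d)} {n : ℕ} (hz : 0 < z) (hw : ∀ p ∈ P, 0 ≤ w p)
    (hcard : Q.card = n) : optCost z w P n ≤ cCost z w P Q :=
  csInf_le ⟨0, by rintro r ⟨Q', _, rfl⟩; exact cCost_nonneg hz hw⟩ ⟨Q, hcard, rfl⟩

lemma cCost_anti (hz : 0 < z) {P S Q : Finset (Pt d)} (hw : ∀ p ∈ P, 0 ≤ w p)
    (hS : S.Nonempty) (hSQ : S ⊆ Q) : cCost z w P Q ≤ cCost z w P S :=
  Finset.sum_le_sum fun p hp => mul_le_mul_of_nonneg_left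
    (Real.rpow_le_rpow (sInf_dist_nonneg p _)
      (csInf_le_csInf (distImg_bdd p _) ((Finset.coe_nonempty.2 hS).image _)
        (Set.image_mono (Finset.coe_subset.2 hSQ))) hz.le) (hw p hp)

lemma cCost_le_sum (hz : 0 < z) {P Q : Finset (Pt d)} (hw : ∀ p ∈ P, 0 ≤ w p)
    (g : Pt d → Pt d) (hg : ∀ p ∈ P, g p ∈ Q) :
    cCost z w P Q ≤ ∑ p ∈ P, w p * (dist p (g p)) ^ z :=
  Finset.sum_le_sum fun p hp => mul_le_mul_of_nonneg_left
    (Real.rpow_le_rpow (sInf_dist_nonneg p _)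
      (csInf_le (distImg_bdd p _) ⟨g p, Finset.mem_coe.2 (hg p hp), rfl⟩) hz.le) (hw p hp)

end Helpers

/-- Theorem 1: if the optimal `k`-clustering centers `q i` of `P` (with induced partition
`Pc i` of points whose closest center is `q i`, all nonempty, and optimal 1-clustering
centers `μ i` of the clusters) satisfy `opt(P,k) − opt(P,2k) ≤ w_min·(ε/ρ)^z`, then for
every model set `X` and every per-point cost that is `≥ 1` and `ρ`-Lipschitz in the point,
`{μ i}` with weights `Σ_{p∈Pc i} w_p` is an `ε`-coreset for `P` w.r.t. the sum cost, and an
`ε`-coreset w.r.t. the maximum cost. -/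
theorem theorem1 {d : ℕ} (z : ℝ) (hz : 0 < z)
    (P : Finset (Pt d)) (hP : P.Nonempty)
    (w : Pt d → ℝ) (hw : ∀ p ∈ P, 0 < w p)
    (ε ρ : ℝ) (hε : 0 < ε) (hρ : 0 < ρ)
    (k : ℕ) (hk : 0 < k)
    (q : Fin k → Pt d) (hq : Function.Injective q)
    (hQopt : cCost z w P (Finset.univ.image q) = optCost z w P k)
    (f : Pt d → Fin k)
    (hfmin : ∀ p ∈ P, dist p (q (f p))
        = sInf ((fun c => dist p c) '' ((Finset.univ.image q : Finset (Pt d)) : Set (Pt d))))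
    (Pc : Fin k → Finset (Pt d)) (hPc : ∀ i, Pc i = P.filter fun p => f p = i)
    (hne : ∀ i, (Pc i).Nonempty)
    (μ : Fin k → Pt d) (hμ : ∀ i, cCost z w (Pc i) {μ i} = optCost z w (Pc i) 1)
    (hgap : optCost z w P k - optCost z w P (2 * k) ≤ P.inf' hP w * (ε / ρ) ^ z)
    (X : Type*) (cost : Pt d → X → ℝ)
    (hc1 : ∀ p x, 1 ≤ cost p x)
    (hlip : ∀ (x : X) (p p' : Pt d), |cost p x - cost p' x| ≤ ρ * dist p p') :
    ∀ x : X,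
      ((1 - ε) * (∑ p ∈ P, w p * cost p x) ≤ (∑ i, (∑ p ∈ Pc i, w p) * cost (μ i) x) ∧
       (∑ i, (∑ p ∈ Pc i, w p) * cost (μ i) x) ≤ (1 + ε) * (∑ p ∈ P, w p * cost p x)) ∧
      ((1 - ε) * P.sup' hP (fun p => cost p x)
          ≤ Finset.univ.sup' (Finset.univ_nonempty_iff.mpr ⟨⟨0, hk⟩⟩) (fun i => cost (μ i) x) ∧
       Finset.univ.sup' (Finset.univ_nonempty_iff.mpr ⟨⟨0, hk⟩⟩) (fun i => cost (μ i) x)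
          ≤ (1 + ε) * P.sup' hP (fun p => cost p x)) := by
  have hwn : ∀ p ∈ P, 0 ≤ w p := fun p hp => (hw p hp).le
  have hmemPc : ∀ {i : Fin k} {p : Pt d}, p ∈ Pc i ↔ p ∈ P ∧ f p = i := by
    intro i p; rw [hPc i]; exact Finset.mem_filter
  have hwnPc : ∀ i : Fin k, ∀ p ∈ Pc i, 0 ≤ w p := fun i p hp => hwn p (hmemPc.1 hp).1
  have hwmin_pos : 0 < P.inf' hP w := by
    obtain ⟨p1, hp1, hmin⟩ := Finset.exists_mem_eq_inf' hP w
    rw [hmin]; exact hw p1 hp1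
  -- Key geometric fact: every point of `P` is within `ε/ρ` of its cluster's 1-center.
  have key : ∀ p ∈ P, dist p (μ (f p)) ≤ ε / ρ := by
    intro p₀ hp₀
    set Q0 : Finset (Pt d) := Finset.univ.image q with hQ0def
    set i := f p₀ with hidef
    have hεdρ : 0 ≤ ε / ρ := by positivity
    by_cases ha : dist p₀ (μ i) = 0
    · rw [ha]; exact hεdρ
    have hne' : p₀ ≠ μ i := fun h => ha (by rw [h, dist_self])
    have hinf : Infinite (Pt d) := Infinite.of_injective (fun t : ℕ => (t : ℝ) • (p₀ - μ i))
      (fun a b h => by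
        have h2 : (a : ℝ) = (b : ℝ) := smul_left_injective ℝ (sub_ne_zero.2 hne') h
        exact_mod_cast h2)
    -- the candidate 2k-center set
    set S : Finset (Pt d) := insert p₀ (insert (μ i) (Q0.erase (q i))) with hSdef
    have hqiQ0 : q i ∈ Q0 := Finset.mem_image.2 ⟨i, Finset.mem_univ _, rfl⟩
    have hcardQ0 : Q0.card = k := by
      rw [hQ0def, Finset.card_image_of_injective _ hq, Finset.card_univ, Fintype.card_fin]
    have hcardS : S.card ≤ 2 * k := by
      have h1 := Finset.card_insert_le p₀ (insert (μ i) (Q0.erase (q i)))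
      have h2 := Finset.card_insert_le (μ i) (Q0.erase (q i))
      have h3 : (Q0.erase (q i)).card = k - 1 := by
        rw [Finset.card_erase_of_mem hqiQ0, hcardQ0]
      have h0 : S.card = (insert p₀ (insert (μ i) (Q0.erase (q i)))).card := rfl
      omega
    obtain ⟨T, hST, hTcard⟩ := Infinite.exists_superset_card_eq S (2 * k) hcardS
    set F : Pt d → ℝ := fun p => w p * (dist p (q (f p))) ^ z with hFdef
    set G : Pt d → ℝ := fun p => w p * (dist p (μ (f p))) ^ z with hGdef
    have hQ0cost : cCost z w P Q0 = ∑ p ∈ P, F p :=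
      Finset.sum_congr rfl fun p hp => by rw [← hfmin p hp]
    -- the comparison assignment
    set g : Pt d → Pt d := fun p => if p = p₀ then p₀ else if f p = i then μ i else q (f p)
      with hgdef
    have hginS : ∀ p ∈ P, g p ∈ S := by
      intro p hp
      by_cases h1 : p = p₀
      · simp [hgdef, h1, hSdef]
      by_cases h2 : f p = i
      · simp [hgdef, h1, h2, hSdef]
      · have hmem : q (f p) ∈ Q0.erase (q i) :=
          Finset.mem_erase.2 ⟨fun hq' => h2 (hq hq'),
            Finset.mem_image.2 ⟨f p, Finset.mem_univ _, rfl⟩⟩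
        simp only [hgdef, if_neg h1, if_neg h2, hSdef, Finset.mem_insert]
        exact Or.inr (Or.inr hmem)
    have hSbound : cCost z w P S ≤ ∑ p ∈ P, w p * (dist p (g p)) ^ z :=
      cCost_le_sum hz hwn g hginS
    -- split the sums over the partition
    have hp₀Pc : p₀ ∈ Pc i := hmemPc.2 ⟨hp₀, rfl⟩
    have hsplit : ∀ h : Pt d → ℝ, ∑ p ∈ P, h p
        = ∑ p ∈ Pc i, h p + ∑ j ∈ Finset.univ.erase i, ∑ p ∈ Pc j, h p := by
      intro h
      have h1 : ∑ j, ∑ p ∈ P.filter (fun p => f p = j), h p = ∑ p ∈ P, h p :=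
        Finset.sum_fiberwise P f h
      have h2 : ∑ j, ∑ p ∈ Pc j, h p = ∑ p ∈ P, h p := by
        rw [← h1]; exact Finset.sum_congr rfl fun j _ => by rw [hPc j]
      rw [← h2, ← Finset.add_sum_erase _ _ (Finset.mem_univ i)]
    -- identify the comparison sum
    have hgsum : ∑ p ∈ P, w p * (dist p (g p)) ^ z
        = (∑ p ∈ Pc i, G p - G p₀) + ∑ j ∈ Finset.univ.erase i, ∑ p ∈ Pc j, F p := by
      rw [hsplit (fun p => w p * (dist p (g p)) ^ z)]
      congr 1
      · -- sum over Pc i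
        rw [← Finset.add_sum_erase _ _ hp₀Pc]
        have hterm0 : w p₀ * (dist p₀ (g p₀)) ^ z = 0 := by
          simp [hgdef, Real.zero_rpow hz.ne']
        rw [hterm0, zero_add]
        have hG0 : ∑ p ∈ Pc i, G p - G p₀ = ∑ p ∈ (Pc i).erase p₀, G p := by
          rw [← Finset.add_sum_erase _ _ hp₀Pc]; ring
        rw [hG0]
        refine Finset.sum_congr rfl fun p hp => ?_
        have hp1 := Finset.mem_erase.1 hp
        have hfp : f p = i := (hmemPc.1 hp1.2).2
        simp [hgdef, hGdef, hp1.1, hfp]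
      · refine Finset.sum_congr rfl fun j hj => Finset.sum_congr rfl fun p hp => ?_
        have hfp : f p = j := (hmemPc.1 hp).2
        have hji : j ≠ i := (Finset.mem_erase.1 hj).1
        have hpne : p ≠ p₀ := fun h => hji (by rw [← hfp, h, ← hidef])
        simp [hgdef, hFdef, hpne, hfp, hji]
    -- optimal 1-center beats q i on Pc i
    have hopt1 : ∑ p ∈ Pc i, G p ≤ ∑ p ∈ Pc i, F p := by
      have e1 : ∑ p ∈ Pc i, G p = cCost z w (Pc i) {μ i} := by
        rw [cCost_singleton]
        exact Finset.sum_congr rfl fun p hp => by simp [hGdef, (hmemPc.1 hp).2]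
      have e2 : ∑ p ∈ Pc i, F p = cCost z w (Pc i) {q i} := by
        rw [cCost_singleton]
        exact Finset.sum_congr rfl fun p hp => by simp [hFdef, (hmemPc.1 hp).2]
      rw [e1, e2, hμ i]
      exact optCost_le hz (hwnPc i) (Finset.card_singleton _)
    -- chain of inequalities
    have hSne : S.Nonempty := ⟨p₀, Finset.mem_insert_self _ _⟩
    have c1 : optCost z w P (2 * k) ≤ cCost z w P S :=
      (optCost_le hz hwn hTcard).trans (cCost_anti hz hwn hSne hST)
    have c2 : G p₀ ≤ cCost z w P Q0 - cCost z w P S := by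
      have hb := hSbound
      rw [hgsum] at hb
      rw [hQ0cost, hsplit F]
      linarith
    have c3 : G p₀ ≤ P.inf' hP w * (ε / ρ) ^ z := by
      have heq : cCost z w P Q0 = optCost z w P k := hQopt
      linarith
    have hwm : P.inf' hP w ≤ w p₀ := Finset.inf'_le w hp₀
    have hpow : (dist p₀ (μ i)) ^ z ≤ (ε / ρ) ^ z := by
      have hd0 : (0:ℝ) ≤ (dist p₀ (μ i)) ^ z := Real.rpow_nonneg dist_nonneg z
      have hGp0 : G p₀ = w p₀ * (dist p₀ (μ i)) ^ z := rfl
      have h1 : P.inf' hP w * (dist p₀ (μ i)) ^ z ≤ P.inf' hP w * (ε / ρ) ^ z := by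
        have h2 : P.inf' hP w * (dist p₀ (μ i)) ^ z ≤ w p₀ * (dist p₀ (μ i)) ^ z :=
          mul_le_mul_of_nonneg_right hwm hd0
        rw [hGp0] at c3
        linarith
      exact le_of_mul_le_mul_left h1 hwmin_pos
    exact (Real.rpow_le_rpow_iff dist_nonneg hεdρ hz).1 hpow
  -- pointwise cost comparison
  intro x
  have habs : ∀ p ∈ P, |cost p x - cost (μ (f p)) x| ≤ ε := by
    intro p hp
    refine (hlip x p (μ (f p))).trans ?_
    have h1 : ρ * dist p (μ (f p)) ≤ ρ * (ε / ρ) :=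
      mul_le_mul_of_nonneg_left (key p hp) hρ.le
    have h2 : ρ * (ε / ρ) = ε := by field_simp
    linarith
  have hlow : ∀ p ∈ P, (1 - ε) * cost p x ≤ cost (μ (f p)) x := by
    intro p hp
    have h1 : cost p x - cost (μ (f p)) x ≤ ε := (le_abs_self _).trans (habs p hp)
    have h2 := hc1 p x
    nlinarith
  have hhigh : ∀ p ∈ P, cost (μ (f p)) x ≤ (1 + ε) * cost p x := by
    intro p hp
    have h1 : -ε ≤ cost p x - cost (μ (f p)) x := by
      have h3 := neg_abs_le (cost p x - cost (μ (f p)) x)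
      have h2 := habs p hp
      linarith
    have h2 := hc1 p x
    nlinarith
  -- rewrite the coreset sum
  have hsumid : (∑ i, (∑ p ∈ Pc i, w p) * cost (μ i) x) = ∑ p ∈ P, w p * cost (μ (f p)) x := by
    calc (∑ i, (∑ p ∈ Pc i, w p) * cost (μ i) x)
        = ∑ i, ∑ p ∈ Pc i, w p * cost (μ (f p)) x := by
          refine Finset.sum_congr rfl fun i _ => ?_
          rw [Finset.sum_mul]
          exact Finset.sum_congr rfl fun p hp => by rw [(hmemPc.1 hp).2]
      _ = ∑ j, ∑ p ∈ P.filter (fun p => f p = j), w p * cost (μ (f p)) x :=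
          Finset.sum_congr rfl fun j _ => by rw [hPc j]
      _ = ∑ p ∈ P, w p * cost (μ (f p)) x := Finset.sum_fiberwise P f _
  constructor
  · constructor
    · rw [hsumid, Finset.mul_sum]
      refine Finset.sum_le_sum fun p hp => ?_
      have h1 := hlow p hp
      have h2 := hwn p hp
      nlinarith
    · rw [hsumid, Finset.mul_sum]
      refine Finset.sum_le_sum fun p hp => ?_
      have h1 := hhigh p hp
      have h2 := hwn p hp
      nlinarith
  · constructor
    · obtain ⟨pm, hpm, hsupeq⟩ := Finset.exists_mem_eq_sup' hP (fun p => cost p x)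
      rw [hsupeq]
      exact (hlow pm hpm).trans
        (Finset.le_sup' (fun i => cost (μ i) x) (Finset.mem_univ (f pm)))
    · refine Finset.sup'_le _ _ fun i _ => ?_
      obtain ⟨p, hpPc⟩ := hne i
      obtain ⟨hpP, hfp⟩ := hmemPc.1 hpPc
      have h1 : cost (μ i) x ≤ (1 + ε) * cost p x := by rw [← hfp]; exact hhigh p hpP
      refine h1.trans (mul_le_mul_of_nonneg_left ?_ (by linarith : (0:ℝ) ≤ 1 + ε))
      exact Finset.le_sup' (fun p => cost p x) hpP
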